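/- Define f_n(t) = Σ_{k=0}^{⌊(n-1)/2⌋} (1/(k+1)) · (n-1)!/(k!·k!·(n-2k-1)!) · t^k and p_m(t) = Σ_{i=0}^{⌊(m-1)/2⌋} (1/(i+1))·C(m-i-2,i)·C(m,i)·t^i for m ≥ 2, with f_1(t)=1. Then for all n ≥ 2: f_n(t) = p_{n+1}(t) - t·Σ_{k=2}^{n-1} p_k(t)·f_{n-k}(t). -/

import Mathlib

open Polynomial Finset

/-- `cyclePoly m` is the Kazhdan–Lusztig polynomial of the `m`-cycle (for `m ≥ 2`):
`p_m(t) = Σ_{i=0}^{⌊(m-1)/2⌋} (1/(i+1))·C(m-i-2,i)·C(m,i)·t^i`. -/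
noncomputable def cyclePoly (m : ℕ) : Polynomial ℚ :=
  ∑ i ∈ range ((m - 1) / 2 + 1),
    Polynomial.C ((1 / (i + 1 : ℚ)) * (Nat.choose (m - i - 2) i) * (Nat.choose m i)) * X ^ i

/-- `fanPoly n = f_n`, the Liu–Xie–Yang closed form for the Kazhdan–Lusztig polynomial of
the fan graph `F_n` (with `f_1 = 1`). -/
noncomputable def fanPoly (n : ℕ) : Polynomial ℚ :=
  ∑ k ∈ range ((n - 1) / 2 + 1),
    Polynomial.C ((1 / (k + 1 : ℚ)) * (Nat.factorial (n - 1)) /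
        ((Nat.factorial k) * (Nat.factorial k) * (Nat.factorial (n - 2 * k - 1)))) * X ^ k

lemma catalan_cast (k : ℕ) : (catalan k : ℚ) = (Nat.choose (2*k) k : ℚ) / (k+1) := by
  rw [catalan_eq_centralBinom_div]
  rw [Nat.cast_div (Nat.succ_dvd_centralBinom k) (by positivity)]
  norm_num [Nat.centralBinom]

noncomputable def betaQ (r s : ℕ) : ℚ := (r+1) * (Nat.choose (2*s+r) s : ℚ) / (s+r+1)

lemma betaQ_zero (r : ℕ) : betaQ r 0 = 1 := by
  simp [betaQ]
  field_simp
  exact Nat.cast_add_one_ne_zero r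

lemma betaQ_cat (s : ℕ) : betaQ 0 s = (catalan s : ℚ) := by
  rw [catalan_cast, betaQ]
  ring

lemma betaQ_one (s : ℕ) : betaQ 1 s = (catalan (s+1) : ℚ) := by
  rw [catalan_cast, betaQ]
  have h1 : 2*(s+1) = (2*s+1)+1 := by ring
  rw [h1, Nat.choose_succ_succ' (2*s+1) s]
  have h2 : (2*s+1).choose (s+1) = (2*s+1).choose s := by
    rw [← Nat.choose_symm (by omega)]
    congr 1
    omega
  rw [h2]
  push_cast
  ring

lemma betaQ_pascal (r s : ℕ) : betaQ (r+1) (s+1) = betaQ r (s+1) + betaQ (r+2) s := by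
  unfold betaQ
  have h1 : 2*(s+1)+(r+1) = (2*s+r+2)+1 := by ring
  have h2 : 2*(s+1)+r = 2*s+r+2 := by ring
  have h3 : 2*s+(r+2) = 2*s+r+2 := by ring
  rw [h1, h2, h3, Nat.choose_succ_succ' (2*s+r+2) s]
  have key : ((2*s+r+2).choose (s+1) : ℚ) * (s+1) = ((2*s+r+2).choose s : ℚ) * (s+r+2) := by
    have := Nat.choose_succ_right_eq (2*s+r+2) s
    have h4 : 2*s+r+2-s = s+r+2 := by omega
    rw [h4] at this
    exact_mod_cast this
  have d1 : ((s:ℚ)+1+(r+1)+1) ≠ 0 := by positivity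
  have d2 : ((s:ℚ)+1+r+1) ≠ 0 := by positivity
  have d3 : ((s:ℚ)+(r+2)+1) ≠ 0 := by positivity
  field_simp
  push_cast
  linear_combination ((s:ℚ)+r+3) * key

lemma sum_range_choose_eq (n k : ℕ) : ∑ m ∈ range n, Nat.choose m k = Nat.choose n (k+1) := by
  induction n with
  | zero => simp
  | succ n ih => rw [sum_range_succ, ih, Nat.choose_succ_succ n k, Nat.add_comm]

lemma vand (N : ℕ) : ∀ r s : ℕ, ∑ p ∈ range (N+1), Nat.choose p r * Nat.choose (N-p) s
    = Nat.choose (N+1) (r+s+1) := by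
  induction N with
  | zero =>
    intro r s
    simp only [range_one, sum_singleton, Nat.zero_sub, Nat.choose]
    rcases r with _|r <;> rcases s with _|s <;> simp [Nat.choose]
  | succ N ih =>
    intro r s
    rcases s with _|s
    · simp only [Nat.choose_zero_right, mul_one]
      exact sum_range_choose_eq (N+2) r
    · rw [sum_range_succ]
      have h0 : N + 1 - (N+1) = 0 := by omega
      rw [h0]
      have hsplit : ∀ p ∈ range (N+1), Nat.choose p r * Nat.choose (N+1-p) (s+1)
          = Nat.choose p r * Nat.choose (N-p) s + Nat.choose p r * Nat.choose (N-p) (s+1) := by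
        intro p hp
        simp only [mem_range] at hp
        have : N + 1 - p = (N - p) + 1 := by omega
        rw [this, Nat.choose_succ_succ, Nat.mul_add]
      rw [sum_congr rfl hsplit, sum_add_distrib, ih r s, ih r (s+1)]
      have : Nat.choose 0 (s+1) = 0 := Nat.choose_eq_zero_of_lt (by omega)
      rw [this, mul_zero, add_zero]
      have : r + (s+1) + 1 = (r + s + 1) + 1 := by ring
      rw [this, Nat.choose_succ_succ (N+1) (r+s+1)]

lemma conv : ∀ s r : ℕ, ∑ a ∈ range (s+1), (catalan a : ℚ) * betaQ r (s - a) = betaQ (r+1) s := by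
  intro s
  induction s using Nat.strong_induction_on with
  | _ s ihs =>
  intro r
  induction r with
  | zero =>
    have h : ∀ a ∈ range (s+1), (catalan a : ℚ) * betaQ 0 (s-a)
        = ((catalan a * catalan (s-a) : ℕ) : ℚ) := by
      intro a _; rw [betaQ_cat]; push_cast; ring
    rw [sum_congr rfl h, ← Nat.cast_sum, betaQ_one]
    norm_cast
    rw [catalan_succ s]
    exact (Fin.sum_univ_eq_sum_range (fun i => catalan i * catalan (s - i)) (s+1)).symm
  | succ r ihr =>
    rcases s with _|s'
    · simp [betaQ_zero]
    · rw [sum_range_succ]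
      have h1 : s' + 1 - (s'+1) = 0 := by omega
      rw [h1, betaQ_zero, mul_one]
      have h2 : ∀ a ∈ range (s'+1), (catalan a : ℚ) * betaQ (r+1) (s'+1-a)
          = (catalan a : ℚ) * betaQ r (s'+1-a) + (catalan a : ℚ) * betaQ (r+2) (s'-a) := by
        intro a ha
        simp only [mem_range] at ha
        have e : s' + 1 - a = (s' - a) + 1 := by omega
        rw [e, betaQ_pascal r (s'-a), mul_add]
      rw [sum_congr rfl h2, sum_add_distrib]
      have h3 : ∑ a ∈ range (s'+1), (catalan a : ℚ) * betaQ r (s'+1-a)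
          = betaQ (r+1) (s'+1) - (catalan (s'+1) : ℚ) := by
        have := ihr
        rw [sum_range_succ, h1, betaQ_zero, mul_one] at this
        linarith
      rw [h3, ihs s' (by omega) (r+2), betaQ_pascal (r+1) s']
      ring

noncomputable def Ssum (i M : ℕ) : ℚ :=
  ∑ j ∈ range (i+1), betaQ (i-j) j * (Nat.choose (M+j) (i+j) : ℚ)

lemma claim (i M : ℕ) :
    Ssum (i+1) M + Ssum i M = (catalan (i+1) : ℚ) * Nat.choose (M+i+2) (2*i+2) := by
  have c1 : betaQ 1 i = betaQ 0 (i+1) := by rw [betaQ_one, betaQ_cat]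
  set T : ℚ := ∑ j ∈ range (i+2), betaQ (i+1-j) j * (Nat.choose (M+j) (i+j) : ℚ) with hTdef
  have step1 : Ssum (i+1) (M+1) = Ssum (i+1) M + T := by
    rw [hTdef]
    unfold Ssum
    rw [show i+1+1 = i+2 from by omega, ← sum_add_distrib]
    apply sum_congr rfl
    intro j hj
    have e1 : M + 1 + j = (M + j) + 1 := by omega
    have e2 : i + 1 + j = (i + j) + 1 := by omega
    rw [e1, e2, Nat.choose_succ_succ' (M+j) (i+j)]
    push_cast
    ring
  have step2 : T = Ssum i M + (Ssum (i+1) (M+1)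
      - betaQ 1 i * Nat.choose (M+i+1) (2*i+1)
      - betaQ 0 (i+1) * Nat.choose (M+i+2) (2*i+2))
      + betaQ 0 (i+1) * Nat.choose (M+i+1) (2*i+1) := by
    have hsplit : ∀ j ∈ range (i+1),
        betaQ (i+1-j) j * (Nat.choose (M+j) (i+j) : ℚ)
        = betaQ (i-j) j * (Nat.choose (M+j) (i+j) : ℚ)
          + (if j = 0 then 0 else betaQ (i+2-j) (j-1) * (Nat.choose (M+j) (i+j) : ℚ)) := by
      intro j hj
      simp only [mem_range] at hj
      rcases Nat.eq_zero_or_pos j with h0 | hpos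
      · subst h0
        simp [betaQ_zero]
      · obtain ⟨j', rfl⟩ : ∃ j', j = j' + 1 := ⟨j - 1, by omega⟩
        rw [if_neg (by omega),
          show i + 1 - (j'+1) = (i - (j'+1)) + 1 from by omega,
          show i + 2 - (j'+1) = (i - (j'+1)) + 2 from by omega,
          show (j'+1) - 1 = j' from rfl,
          betaQ_pascal (i-(j'+1)) j']
        ring
    have hT1 : T = (∑ j ∈ range (i+1), betaQ (i+1-j) j * (Nat.choose (M+j) (i+j) : ℚ))
        + betaQ 0 (i+1) * Nat.choose (M+i+1) (2*i+1) := by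
      rw [hTdef, sum_range_succ]
      congr 1
      rw [show i + 1 - (i+1) = 0 from by omega, show M + (i+1) = M + i + 1 from by omega,
        show i + (i+1) = 2*i+1 from by omega]
    have hT2 : ∑ j ∈ range (i+1), (if j = 0 then 0 else betaQ (i+2-j) (j-1) * (Nat.choose (M+j) (i+j) : ℚ))
        = Ssum (i+1) (M+1) - betaQ 1 i * Nat.choose (M+i+1) (2*i+1)
          - betaQ 0 (i+1) * Nat.choose (M+i+2) (2*i+2) := by
      rw [sum_range_succ' _ i]
      have e : ∀ j ∈ range i,
          (if j+1 = 0 then 0 else betaQ (i+2-(j+1)) (j+1-1) * (Nat.choose (M+(j+1)) (i+(j+1)) : ℚ))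
          = betaQ (i+1-j) j * (Nat.choose (M+1+j) (i+1+j) : ℚ) := by
        intro j hj
        rw [if_neg (by omega), show i + 2 - (j+1) = i + 1 - j from by omega,
          show j + 1 - 1 = j from rfl, show M + (j+1) = M + 1 + j from by omega,
          show i + (j+1) = i + 1 + j from by omega]
      rw [sum_congr rfl e, if_pos rfl, add_zero]
      have hS : Ssum (i+1) (M+1) = (∑ j ∈ range i, betaQ (i+1-j) j * (Nat.choose (M+1+j) (i+1+j) : ℚ))
          + betaQ 1 i * Nat.choose (M+i+1) (2*i+1)
          + betaQ 0 (i+1) * Nat.choose (M+i+2) (2*i+2) := by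
        unfold Ssum
        rw [show i+1+1 = i+2 from by omega, sum_range_succ, sum_range_succ]
        rw [show i + 1 - i = 1 from by omega, show M + 1 + i = M + i + 1 from by omega,
          show i + 1 + i = 2*i+1 from by omega, show i + 1 - (i+1) = 0 from by omega,
          show M + 1 + (i+1) = M + i + 2 from by omega,
          show i + 1 + (i+1) = 2*i+2 from by omega]
      rw [hS]
      ring
    rw [hT1, sum_congr rfl hsplit, sum_add_distrib, hT2]
    unfold Ssum
    ring
  have h := step1
  rw [step2, c1, betaQ_cat (i+1)] at h
  linarith

lemma E1 (i M : ℕ) : (Nat.choose M (i+1) : ℚ) * Nat.choose (M+i+3) (i+1) / (i+2)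
    + (Nat.choose M i : ℚ) * Nat.choose (M+i+2) i / (i+1)
    = (catalan (i+1) : ℚ) * Nat.choose (M+i+2) (2*i+2) := by
  rcases lt_trichotomy M i with hM | hM | hM
  · rw [Nat.choose_eq_zero_of_lt (show M < i+1 by omega),
      Nat.choose_eq_zero_of_lt (show M < i by omega),
      Nat.choose_eq_zero_of_lt (show M + i + 2 < 2*i+2 by omega)]
    norm_num
  · subst hM
    rw [Nat.choose_eq_zero_of_lt (by omega), Nat.choose_self,
      show M + M + 2 = 2*M+2 from by omega, Nat.choose_self, catalan_cast (M+1),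
      show 2*(M+1) = 2*M+2 from by omega]
    have key := Nat.choose_succ_right_eq (2*M+2) M
    rw [show 2*M+2-M = M+2 from by omega] at key
    have keyQ : ((2*M+2).choose (M+1) : ℚ) * (M+1) = ((2*M+2).choose M : ℚ) * (M+2) := by
      exact_mod_cast key
    push_cast
    have d1 : (M:ℚ) + 1 ≠ 0 := by positivity
    have d2 : (M:ℚ) + 1 + 1 ≠ 0 := by positivity
    field_simp
    linear_combination -((M:ℚ)+2) * keyQ
  · obtain ⟨j, rfl⟩ : ∃ j, M = j + i + 1 := ⟨M - i - 1, by omega⟩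
    have c1 : (Nat.choose (j+i+1) (i+1) : ℚ)
        = (j+i+1).factorial / ((i+1).factorial * j.factorial) := by
      rw [Nat.cast_choose ℚ (by omega), show j+i+1-(i+1) = j from by omega]
    have c2 : (Nat.choose (j+i+1+i+3) (i+1) : ℚ)
        = (j+2*i+4).factorial / ((i+1).factorial * (j+i+3).factorial) := by
      rw [Nat.cast_choose ℚ (by omega), show j+i+1+i+3 = j+2*i+4 from by omega,
        show j+2*i+4-(i+1) = j+i+3 from by omega]
    have c3 : (Nat.choose (j+i+1) i : ℚ)
        = (j+i+1).factorial / (i.factorial * (j+1).factorial) := by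
      rw [Nat.cast_choose ℚ (by omega), show j+i+1-i = j+1 from by omega]
    have c4 : (Nat.choose (j+i+1+i+2) i : ℚ)
        = (j+2*i+3).factorial / (i.factorial * (j+i+3).factorial) := by
      rw [Nat.cast_choose ℚ (by omega), show j+i+1+i+2 = j+2*i+3 from by omega,
        show j+2*i+3-i = j+i+3 from by omega]
    have c5 : (Nat.choose (j+i+1+i+2) (2*i+2) : ℚ)
        = (j+2*i+3).factorial / ((2*i+2).factorial * (j+1).factorial) := by
      rw [Nat.cast_choose ℚ (by omega), show j+i+1+i+2 = j+2*i+3 from by omega,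
        show j+2*i+3-(2*i+2) = j+1 from by omega]
    have c6 : (catalan (i+1) : ℚ)
        = (2*i+2).factorial / ((i+1).factorial * (i+1).factorial) / (i+2) := by
      rw [catalan_cast (i+1), Nat.cast_choose ℚ (by omega),
        show 2*(i+1) = 2*i+2 from by omega, show 2*i+2-(i+1) = i+1 from by omega]
      push_cast
      ring
    rw [c1, c2, c3, c4, c5, c6]
    have f1 : ((j+2*i+4).factorial : ℚ) = (j+2*i+4) * (j+2*i+3).factorial := by
      rw [show j+2*i+4 = (j+2*i+3)+1 from by omega, Nat.factorial_succ]
      push_cast; ring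
    have f2 : ((j+1).factorial : ℚ) = (j+1) * j.factorial := by
      rw [Nat.factorial_succ]; push_cast; ring
    have f3 : ((i+1).factorial : ℚ) = (i+1) * i.factorial := by
      rw [Nat.factorial_succ]; push_cast; ring
    have f4 : ((j+i+3).factorial : ℚ) = (j+i+3) * (j+i+2) * (j+i+1).factorial := by
      rw [show j+i+3 = (j+i+2)+1 from by omega, Nat.factorial_succ,
        show j+i+2 = (j+i+1)+1 from by omega, Nat.factorial_succ]
      push_cast; ring
    rw [f1, f2, f3, f4]
    have n1 : (i.factorial : ℚ) ≠ 0 := by exact_mod_cast Nat.factorial_ne_zero i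
    have n2 : (j.factorial : ℚ) ≠ 0 := by exact_mod_cast Nat.factorial_ne_zero j
    have n3 : ((j+i+1).factorial : ℚ) ≠ 0 := by exact_mod_cast Nat.factorial_ne_zero _
    have n4 : ((j+2*i+3).factorial : ℚ) ≠ 0 := by exact_mod_cast Nat.factorial_ne_zero _
    have n5 : ((2*i+2).factorial : ℚ) ≠ 0 := by exact_mod_cast Nat.factorial_ne_zero _
    push_cast
    field_simp
    ring

lemma keyLemma : ∀ i M : ℕ, Ssum i M = (Nat.choose M i : ℚ) * Nat.choose (M+i+2) i / (i+1) := by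
  intro i
  induction i with
  | zero =>
    intro M
    simp [Ssum, betaQ_zero]
  | succ i ih =>
    intro M
    have hc := claim i M
    rw [ih M] at hc
    have he := E1 i M
    have e1 : M + (i+1) + 2 = M + i + 3 := by omega
    rw [e1]
    push_cast at hc he ⊢
    rw [show ((i:ℚ)+1+1) = (i:ℚ)+2 from by ring]
    linarith

lemma coeff_sum_C_mul_X_pow (f : ℕ → ℚ) (K k : ℕ) :
    (∑ j ∈ range K, Polynomial.C (f j) * X ^ j).coeff k = if k < K then f k else 0 := by
  rw [finset_sum_coeff]
  simp only [coeff_C_mul, coeff_X_pow, mul_ite, mul_one, mul_zero]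
  rw [Finset.sum_ite_eq (range K) k f]
  simp [mem_range]

lemma fanCoeff (n : ℕ) (hn : 1 ≤ n) (k : ℕ) :
    (fanPoly n).coeff k = (catalan k : ℚ) * Nat.choose (n-1) (2*k) := by
  rw [fanPoly, coeff_sum_C_mul_X_pow]
  by_cases hk : k < (n-1)/2 + 1
  · rw [if_pos hk]
    have h2k : 2*k ≤ n - 1 := by omega
    have e : n - 2*k - 1 = (n-1) - 2*k := by omega
    rw [e]
    have h1 : ((n-1).factorial : ℚ)
        = (Nat.choose (n-1) (2*k) : ℚ) * (2*k).factorial * ((n-1) - 2*k).factorial := by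
      exact_mod_cast congrArg (Nat.cast (R := ℚ))
        (Nat.choose_mul_factorial_mul_factorial h2k).symm
    have h2 : ((2*k).factorial : ℚ)
        = (Nat.choose (2*k) k : ℚ) * k.factorial * k.factorial := by
      have := Nat.choose_mul_factorial_mul_factorial (show k ≤ 2*k by omega)
      rw [show 2*k - k = k from by omega] at this
      exact_mod_cast this.symm
    rw [h1, h2, catalan_cast]
    have n1 : (k.factorial : ℚ) ≠ 0 := by exact_mod_cast Nat.factorial_ne_zero k
    have n2 : (((n-1) - 2*k).factorial : ℚ) ≠ 0 := by exact_mod_cast Nat.factorial_ne_zero _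
    have n3 : (k:ℚ) + 1 ≠ 0 := by positivity
    field_simp
  · rw [if_neg hk, Nat.choose_eq_zero_of_lt (show n-1 < 2*k by omega), Nat.cast_zero, mul_zero]

lemma cycleCoeff (m : ℕ) (hm : 2 ≤ m) (i : ℕ) :
    (cyclePoly m).coeff i
      = (Nat.choose (m-i-2) i : ℚ) * Nat.choose m i / (i+1) := by
  rw [cyclePoly, coeff_sum_C_mul_X_pow]
  by_cases hi : i < (m-1)/2 + 1
  · rw [if_pos hi]; ring
  · rw [if_neg hi, Nat.choose_eq_zero_of_lt (show m-i-2 < i by omega), Nat.cast_zero,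
      zero_mul, zero_div]

noncomputable def g (m : ℕ) : Polynomial ℚ := if m ≤ 1 then 0 else fanPoly (m-1)

lemma g_zero (m : ℕ) (hm : m ≤ 1) : g m = 0 := if_pos hm

lemma gCoeff (m : ℕ) (hm : 2 ≤ m) (k : ℕ) :
    (g m).coeff k = (catalan k : ℚ) * Nat.choose (m-2) (2*k) := by
  rw [g, if_neg (by omega), fanCoeff (m-1) (by omega), show m-1-1 = m-2 from by omega]

noncomputable def W : ℕ → ℕ → Polynomial ℚ
  | 0, m => if m = 0 then 1 else 0
  | (s+1), m => ∑ j ∈ range (m+1), g j * W s (m - j)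

lemma W_succ (s m : ℕ) : W (s+1) m = ∑ j ∈ range (m+1), g j * W s (m - j) := rfl

lemma Wzero : ∀ s m : ℕ, m < 2*s → W s m = 0 := by
  intro s
  induction s with
  | zero => intro m hm; omega
  | succ s ih =>
    intro m hm
    rw [W_succ]
    apply Finset.sum_eq_zero
    intro j hj
    simp only [mem_range] at hj
    rcases le_or_gt j 1 with h | h
    · rw [g_zero j h, zero_mul]
    · rw [ih (m-j) (by omega), mul_zero]

lemma W_one (m : ℕ) : W 1 m = g m := by
  rw [W_succ]
  rw [Finset.sum_eq_single m]
  · show g m * (if m - m = 0 then 1 else 0) = g m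
    rw [if_pos (by omega), mul_one]
  · intro j hj hne
    simp only [mem_range] at hj
    show g j * (if m - j = 0 then 1 else 0) = 0
    rw [if_neg (by omega), mul_zero]
  · intro h
    exact absurd (mem_range.mpr (by omega)) h

lemma Wcoeff : ∀ r : ℕ, ∀ m, 2 ≤ m → ∀ i,
    (W (r+1) m).coeff i = betaQ r i * Nat.choose (m-r-2) (2*i+r) := by
  intro r
  induction r with
  | zero =>
    intro m hm i
    rw [W_one, gCoeff m hm, betaQ_cat, show m-0-2 = m-2 from by omega,
      show 2*i+0 = 2*i from by omega]
  | succ r ih =>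
    intro m hm i
    rcases lt_or_ge m (2*(r+2)) with hsmall | hbig
    · rw [Wzero (r+2) m (by omega),
        Nat.choose_eq_zero_of_lt (show m-(r+1)-2 < 2*i+(r+1) by omega)]
      simp
    · rw [W_succ, finset_sum_coeff]
      have hterm : ∀ j ∈ range (m+1), (g j * W (r+1) (m-j)).coeff i
          = ∑ ab ∈ Finset.HasAntidiagonal.antidiagonal i, (g j).coeff ab.1 * (W (r+1) (m-j)).coeff ab.2 :=
        fun j _ => coeff_mul _ _ i
      rw [sum_congr rfl hterm, Finset.sum_comm]
      have inner : ∀ ab ∈ Finset.HasAntidiagonal.antidiagonal i,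
          ∑ j ∈ range (m+1), (g j).coeff ab.1 * (W (r+1) (m-j)).coeff ab.2
          = (catalan ab.1 : ℚ) * betaQ r ab.2 * Nat.choose (m-r-3) (2*ab.1+2*ab.2+r+1) := by
        rintro ⟨a, b⟩ hab
        simp only [Finset.HasAntidiagonal.mem_antidiagonal] at hab
        have hshift : ∑ j ∈ range (m+1), (g j).coeff a * (W (r+1) (m-j)).coeff b
            = ∑ p ∈ range (m-1), (g (p+2)).coeff a * (W (r+1) (m-(p+2))).coeff b := by
          rw [show m+1 = (m-1)+1+1 from by omega, sum_range_succ', sum_range_succ']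
          rw [g_zero 0 (by omega), g_zero 1 (by omega)]
          simp
        rw [hshift]
        have hrestrict : ∑ p ∈ range (m-1), (g (p+2)).coeff a * (W (r+1) (m-(p+2))).coeff b
            = ∑ p ∈ range (m-3), (g (p+2)).coeff a * (W (r+1) (m-(p+2))).coeff b := by
          apply (Finset.sum_subset ?_ ?_).symm
          · intro p hp
            simp only [mem_range] at hp ⊢
            omega
          · intro p hp hp2
            simp only [mem_range, not_lt] at hp hp2
            rw [Wzero (r+1) (m-(p+2)) (by omega), coeff_zero, mul_zero]
        rw [hrestrict]
        have hterm2 : ∀ p ∈ range (m-3),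
            (g (p+2)).coeff a * (W (r+1) (m-(p+2))).coeff b
            = (catalan a : ℚ) * betaQ r b
              * (Nat.choose p (2*a) * Nat.choose ((m-r-4)-p) (2*b+r) : ℕ) := by
          intro p hp
          simp only [mem_range] at hp
          rw [gCoeff (p+2) (by omega), ih (m-(p+2)) (by omega)]
          rw [show (p+2)-2 = p from by omega,
            show (m-(p+2))-r-2 = (m-r-4)-p from by omega]
          push_cast
          ring
        rw [sum_congr rfl hterm2, ← Finset.mul_sum, ← Nat.cast_sum]
        have hv : ∑ p ∈ range (m-3), Nat.choose p (2*a) * Nat.choose ((m-r-4)-p) (2*b+r)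
            = Nat.choose (m-r-3) (2*a+2*b+r+1) := by
          have hv0 := vand (m-r-4) (2*a) (2*b+r)
          rw [show m-r-4+1 = m-r-3 from by omega,
            show 2*a+(2*b+r)+1 = 2*a+2*b+r+1 from by omega] at hv0
          rw [← hv0]
          apply (Finset.sum_subset ?_ ?_).symm
          · intro p hp
            simp only [mem_range] at hp ⊢
            omega
          · intro p hp hp2
            simp only [mem_range, not_lt] at hp hp2
            have hr1 : 1 ≤ r := by omega
            rw [show (m-r-4)-p = 0 from by omega,
              Nat.choose_eq_zero_of_lt (show 0 < 2*b+r by omega), mul_zero]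
        rw [hv]
      rw [sum_congr rfl inner]
      rw [Finset.Nat.sum_antidiagonal_eq_sum_range_succ_mk]
      have hterm3 : ∀ a ∈ range (i+1),
          (catalan a : ℚ) * betaQ r (i-a) * Nat.choose (m-r-3) (2*a+2*(i-a)+r+1)
          = ((catalan a : ℚ) * betaQ r (i-a)) * Nat.choose (m-r-3) (2*i+r+1) := by
        intro a ha
        simp only [mem_range] at ha
        rw [show 2*a+2*(i-a)+r+1 = 2*i+r+1 from by omega]
      rw [sum_congr rfl hterm3, ← Finset.sum_mul, conv i r]
      rw [show m-(r+1)-2 = m-r-3 from by omega, show 2*i+(r+1) = 2*i+r+1 from by omega]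

lemma cyc_exp (m : ℕ) (hm : 2 ≤ m) : cyclePoly m = ∑ r ∈ range m, X^r * W (r+1) m := by
  apply Polynomial.ext
  intro i
  rw [finset_sum_coeff]
  have hterm : ∀ r ∈ range m, (X^r * W (r+1) m).coeff i
      = if r ≤ i then betaQ r (i-r) * Nat.choose (m-r-2) (2*(i-r)+r) else 0 := by
    intro r hr
    rw [mul_comm, Polynomial.coeff_mul_X_pow']
    by_cases h : r ≤ i
    · rw [if_pos h, if_pos h, Wcoeff r m hm (i-r)]
    · rw [if_neg h, if_neg h]
  rw [sum_congr rfl hterm]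
  rcases le_or_gt (i+2) m with hbig | hsmall
  · -- m ≥ i + 2
    obtain ⟨M, rfl⟩ : ∃ M, m = M + i + 2 := ⟨m - i - 2, by omega⟩
    rw [cycleCoeff _ hm i, show (M+i+2)-i-2 = M from by omega]
    have hrestrict : ∑ r ∈ range (M+i+2),
        (if r ≤ i then betaQ r (i-r) * (Nat.choose ((M+i+2)-r-2) (2*(i-r)+r) : ℚ) else 0)
        = ∑ r ∈ range (i+1),
        (if r ≤ i then betaQ r (i-r) * (Nat.choose ((M+i+2)-r-2) (2*(i-r)+r) : ℚ) else 0) := by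
      apply (Finset.sum_subset ?_ ?_).symm
      · intro r hr; simp only [mem_range] at hr ⊢; omega
      · intro r hr hr2
        simp only [mem_range, not_lt] at hr hr2
        rw [if_neg (by omega)]
    rw [hrestrict]
    have hterm2 : ∀ r ∈ range (i+1),
        (if r ≤ i then betaQ r (i-r) * (Nat.choose ((M+i+2)-r-2) (2*(i-r)+r) : ℚ) else 0)
        = betaQ (i-(i-r)) (i-r) * (Nat.choose (M+(i-r)) (i+(i-r)) : ℚ) := by
      intro r hr
      simp only [mem_range] at hr
      rw [if_pos (by omega), show i-(i-r) = r from by omega,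
        show (M+i+2)-r-2 = M+(i-r) from by omega, show 2*(i-r)+r = i+(i-r) from by omega]
    rw [sum_congr rfl hterm2]
    have hrefl := sum_range_reflect (fun j => betaQ (i-j) j * (Nat.choose (M+j) (i+j) : ℚ)) (i+1)
    have hL : ∑ r ∈ range (i+1), betaQ (i-(i-r)) (i-r) * (Nat.choose (M+(i-r)) (i+(i-r)) : ℚ)
        = Ssum i M := by
      simp only [Ssum]
      rw [← hrefl]
      apply sum_congr rfl
      intro r hr
      simp only [mem_range] at hr
      rw [show i+1-1-r = i-r from by omega]
    rw [hL, keyLemma i M]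
  · -- m ≤ i + 1 : both sides vanish
    rw [cycleCoeff _ hm i, Nat.choose_eq_zero_of_lt (show m-i-2 < i by omega)]
    rw [Finset.sum_eq_zero]
    · norm_num
    · intro r hr
      simp only [mem_range] at hr
      rw [if_pos (by omega),
        Nat.choose_eq_zero_of_lt (show m-r-2 < 2*(i-r)+r by omega), Nat.cast_zero, mul_zero]

theorem fanPoly_recursion (n : ℕ) (hn : 2 ≤ n) :
    fanPoly n = cyclePoly (n + 1) - X * ∑ k ∈ Icc 2 (n - 1), cyclePoly k * fanPoly (n - k) := by
  have key : cyclePoly (n+1) = fanPoly n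
      + X * ∑ k ∈ Icc 2 (n-1), cyclePoly k * fanPoly (n-k) := by
    rw [cyc_exp (n+1) (by omega), sum_range_succ' _ n]
    have f0 : X^0 * W (0+1) (n+1) = fanPoly n := by
      rw [pow_zero, one_mul, W_one, g, if_neg (by omega), show n+1-1 = n from by omega]
    rw [f0, add_comm]
    congr 1
    have hA : ∀ r ∈ range n, X^(r+1) * W (r+1+1) (n+1)
        = X * (∑ j ∈ range (n+2), X^r * (g j * W (r+1) (n+1-j))) := by
      intro r hr
      rw [W_succ (r+1) (n+1), Finset.mul_sum, Finset.mul_sum]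
      apply sum_congr rfl
      intro j hj
      ring
    rw [sum_congr rfl hA, ← Finset.mul_sum]
    congr 1
    rw [Finset.sum_comm]
    have hB : ∀ j ∈ range (n+2),
        ∑ r ∈ range n, X^r * (g j * W (r+1) (n+1-j))
        = g j * ∑ r ∈ range n, X^r * W (r+1) (n+1-j) := by
      intro j hj
      rw [Finset.mul_sum]
      apply sum_congr rfl
      intro r hr
      ring
    rw [sum_congr rfl hB]
    have hC : ∑ j ∈ range (n+2), g j * ∑ r ∈ range n, X^r * W (r+1) (n+1-j)
        = ∑ j ∈ Icc 2 (n-1), g j * ∑ r ∈ range n, X^r * W (r+1) (n+1-j) := by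
      apply (Finset.sum_subset ?_ ?_).symm
      · intro j hj
        simp only [mem_Icc] at hj
        exact mem_range.mpr (by omega)
      · intro j hj hj2
        simp only [mem_range] at hj
        simp only [mem_Icc, not_and_or, not_le] at hj2
        rcases hj2 with h | h
        · rw [g_zero j (by omega), zero_mul]
        · rw [Finset.sum_eq_zero, mul_zero]
          intro r hr
          rw [Wzero (r+1) (n+1-j) (by omega), mul_zero]
    rw [hC]
    have hD : ∀ j ∈ Icc 2 (n-1),
        g j * ∑ r ∈ range n, X^r * W (r+1) (n+1-j) = g j * cyclePoly (n+1-j) := by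
      intro j hj
      simp only [mem_Icc] at hj
      congr 1
      rw [cyc_exp (n+1-j) (by omega)]
      apply (Finset.sum_subset ?_ ?_).symm
      · intro r hr
        simp only [mem_range] at hr ⊢
        omega
      · intro r hr hr2
        simp only [mem_range, not_lt] at hr hr2
        rw [Wzero (r+1) (n+1-j) (by omega), mul_zero]
    rw [sum_congr rfl hD]
    apply Finset.sum_nbij' (fun j => n+1-j) (fun k => n+1-k)
    · intro j hj
      simp only [mem_Icc] at hj ⊢
      omega
    · intro k hk
      simp only [mem_Icc] at hk ⊢
      omega
    · intro j hj
      simp only [mem_Icc] at hj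
      omega
    · intro k hk
      simp only [mem_Icc] at hk
      omega
    · intro j hj
      simp only [mem_Icc] at hj
      rw [g, if_neg (by omega), show n-(n+1-j) = j-1 from by omega, mul_comm]
  rw [key]
  ring
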